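/- Let p ≡ 1 (mod 8) be prime, E: y² = x³ - x over 𝔽_p, and η = 1 + [i] the degree-2 endomorphism. If both 1+√2 and 1-√2 are squares in 𝔽_p, then E(𝔽_p) contains a subgroup of order 32, namely the set of points killed by η⁵. -/

import Mathlib

/-- The elliptic curve `y² = x³ - x` over `ℤ/pℤ`, as a Weierstrass curve in affine coordinates. -/
noncomputable def Ecurve (p : ℕ) : WeierstrassCurve.Affine (ZMod p) :=
  { a₁ := 0, a₂ := 0, a₃ := 0, a₄ := -1, a₆ := 0 }

open WeierstrassCurve.Affine

namespace Stmt15Aux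

lemma Ea₁ {p : ℕ} : (Ecurve p).a₁ = 0 := rfl
lemma Ea₂ {p : ℕ} : (Ecurve p).a₂ = 0 := rfl
lemma Ea₃ {p : ℕ} : (Ecurve p).a₃ = 0 := rfl
lemma Ea₄ {p : ℕ} : (Ecurve p).a₄ = -1 := rfl
lemma Ea₆ {p : ℕ} : (Ecurve p).a₆ = 0 := rfl

lemma EnegY {p : ℕ} (x y : ZMod p) : (Ecurve p).negY x y = -y := by
  rw [WeierstrassCurve.Affine.negY, Ea₁, Ea₃]; ring

lemma Epoint_some_eq_some {R : Type*} [CommRing R] {W : WeierstrassCurve.Affine R}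
    {x₁ y₁ x₂ y₂ : R} {h₁ : W.Nonsingular x₁ y₁} {h₂ : W.Nonsingular x₂ y₂}
    (hx : x₁ = x₂) (hy : y₁ = y₂) : Point.some _ _ h₁ = Point.some _ _ h₂ := by
  subst hx; subst hy; rfl

lemma Epoint_some_inj {R : Type*} [CommRing R] {W : WeierstrassCurve.Affine R}
    {x₁ y₁ x₂ y₂ : R} {h₁ : W.Nonsingular x₁ y₁} {h₂ : W.Nonsingular x₂ y₂}
    (h : Point.some _ _ h₁ = Point.some _ _ h₂) : x₁ = x₂ ∧ y₁ = y₂ := by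
  injection h with hx hy
  exact ⟨hx, hy⟩

variable {p : ℕ} [Fact p.Prime]

lemma ENS (hp2 : (2 : ZMod p) ≠ 0) (x y : ZMod p) :
    (Ecurve p).Nonsingular x y ↔ y ^ 2 = x ^ 3 - x := by
  constructor
  · intro h
    have h' := ((Ecurve p).equation_iff x y).mp h.1
    rw [Ea₁, Ea₂, Ea₃, Ea₄, Ea₆] at h'
    linear_combination h'
  · intro h
    apply fun h1 h2 => (WeierstrassCurve.Affine.equation_iff_nonsingular_of_Δ_ne_zero h2).mp h1
    · rw [WeierstrassCurve.Affine.equation_iff, Ea₁, Ea₂, Ea₃, Ea₄, Ea₆]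
      linear_combination h
    · have hΔ : (Ecurve p).Δ = 64 := by
        rw [WeierstrassCurve.Δ, WeierstrassCurve.b₂, WeierstrassCurve.b₄, WeierstrassCurve.b₆,
          WeierstrassCurve.b₈, Ea₁, Ea₂, Ea₃, Ea₄, Ea₆]
        norm_num
      rw [hΔ, show (64 : ZMod p) = 2 ^ 6 by norm_num]
      exact pow_ne_zero _ hp2

/-- Coordinates of the image of the addition under `(x,y) ↦ (-x, i*y)`: X-coordinate. -/
lemma phi_coordX {i l x₁ x₂ : ZMod p} (hi : i ^ 2 = -1) :
    -((Ecurve p).addX x₁ x₂ l) = (Ecurve p).addX (-x₁) (-x₂) (-i * l) := by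
  simp only [WeierstrassCurve.Affine.addX, Ea₁, Ea₂]
  linear_combination (-(l ^ 2)) * hi

lemma phi_coordY {i l x₁ x₂ y₁ : ZMod p} (hi : i ^ 2 = -1) :
    i * (Ecurve p).addY x₁ x₂ y₁ l = (Ecurve p).addY (-x₁) (-x₂) (i * y₁) (-i * l) := by
  simp only [WeierstrassCurve.Affine.addY, WeierstrassCurve.Affine.negAddY,
    WeierstrassCurve.Affine.addX, WeierstrassCurve.Affine.negY, Ea₁, Ea₂, Ea₃]
  linear_combination (-(i * l ^ 3)) * hi

lemma Edouble (hp2 : (2 : ZMod p) ≠ 0) {x y a b l : ZMod p}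
    (h : (Ecurve p).Nonsingular x y) (h' : (Ecurve p).Nonsingular a b) (hy : y ≠ 0)
    (hl : l * (2 * y) = 3 * x ^ 2 - 1) (hX : l ^ 2 - 2 * x = a) (hY : -(l * (a - x) + y) = b) :
    Point.some _ _ h + Point.some _ _ h = Point.some _ _ h' := by
  have hy' : y ≠ (Ecurve p).negY x y := by
    rw [EnegY]
    intro hc
    apply hy
    have h2y : (2 : ZMod p) * y = 0 := by linear_combination hc
    rcases mul_eq_zero.mp h2y with h0 | h0
    · exact absurd h0 hp2
    · exact h0
  rw [Point.add_self_of_Y_ne hy']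
  have hsl : (Ecurve p).slope x x y y = l := by
    rw [slope_of_Y_ne rfl hy', EnegY, Ea₁, Ea₂, Ea₄]
    have d1 : y - -y ≠ 0 := by
      rw [sub_neg_eq_add, ← two_mul]; exact mul_ne_zero hp2 hy
    rw [div_eq_iff d1]
    linear_combination -hl
  apply Epoint_some_eq_some
  · rw [hsl]
    simp only [WeierstrassCurve.Affine.addX, Ea₁, Ea₂]
    linear_combination hX
  · rw [hsl]
    simp only [WeierstrassCurve.Affine.addY, WeierstrassCurve.Affine.negAddY,
      WeierstrassCurve.Affine.addX, WeierstrassCurve.Affine.negY, Ea₁, Ea₂, Ea₃]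
    linear_combination hY - l * hX

lemma phi_add (hp2 : (2 : ZMod p) ≠ 0) {i : ZMod p} (hi : i ^ 2 = -1)
    (φ : (Ecurve p).Point → (Ecurve p).Point) (hφ0 : φ 0 = 0)
    (hφ : ∀ (x y : ZMod p) (h : (Ecurve p).Nonsingular x y),
      ∃ h' : (Ecurve p).Nonsingular (-x) (i * y), φ (Point.some _ _ h) = Point.some _ _ h') :
    ∀ P Q : (Ecurve p).Point, φ (P + Q) = φ P + φ Q := by
  have hi0 : i ≠ 0 := by
    intro h; rw [h] at hi; exact one_ne_zero (α := ZMod p) (by linear_combination hi)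
  intro P Q
  rcases P with _ | @⟨x₁, y₁, h₁⟩
  · rw [← Point.zero_def, zero_add, hφ0, zero_add]
  rcases Q with _ | @⟨x₂, y₂, h₂⟩
  · rw [← Point.zero_def, add_zero, hφ0, add_zero]
  obtain ⟨h₁', e₁⟩ := hφ x₁ y₁ h₁
  obtain ⟨h₂', e₂⟩ := hφ x₂ y₂ h₂
  by_cases hx : x₁ = x₂
  · by_cases hy : y₁ = (Ecurve p).negY x₂ y₂
    · rw [Point.add_of_Y_eq hx hy, hφ0, e₁, e₂,
        Point.add_of_Y_eq (show -x₁ = -x₂ by rw [hx])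
          (show i * y₁ = (Ecurve p).negY (-x₂) (i * y₂) by
            rw [EnegY] at hy ⊢; rw [hy]; ring)]
    · have hy₂ : y₁ = y₂ := Y_eq_of_Y_ne h₁.1 h₂.1 hx hy
      subst hx; subst hy₂
      have hy0 : y₁ ≠ 0 := by
        intro h0; apply hy; rw [EnegY, h0, neg_zero]
      have hy' : i * y₁ ≠ (Ecurve p).negY (-x₁) (i * y₁) := by
        rw [EnegY]
        intro hc
        have h2y : (2 : ZMod p) * (i * y₁) = 0 := by linear_combination hc
        rcases mul_eq_zero.mp h2y with h0 | h0
        · exact hp2 h0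
        · rcases mul_eq_zero.mp h0 with h0 | h0
          · exact hi0 h0
          · exact hy0 h0
      rw [Point.add_of_Y_ne hy]
      obtain ⟨ha', ea⟩ := hφ _ _ (nonsingular_add h₁ h₂ fun h => hy h.2)
      rw [ea, e₁, Point.add_of_Y_ne hy']
      set l := (Ecurve p).slope x₁ x₁ y₁ y₁ with hldef
      have hl : (Ecurve p).slope (-x₁) (-x₁) (i * y₁) (i * y₁) = -i * l := by
        rw [hldef, slope_of_Y_ne rfl hy', slope_of_Y_ne rfl hy]
        simp only [EnegY, Ea₁, Ea₂, Ea₄]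
        have d1 : y₁ - -y₁ ≠ 0 := by
          rw [sub_neg_eq_add, ← two_mul]; exact mul_ne_zero hp2 hy0
        have d2 : i * y₁ - -(i * y₁) ≠ 0 := by
          rw [sub_neg_eq_add, ← two_mul]
          exact mul_ne_zero hp2 (mul_ne_zero hi0 hy0)
        rw [← mul_div_assoc, div_eq_div_iff d2 d1]
        linear_combination (2 * y₁ * (3 * x₁ ^ 2 - 1)) * hi
      exact Epoint_some_eq_some (by rw [hl]; exact phi_coordX hi)
        (by rw [hl]; exact phi_coordY hi)
  · have hx' : -x₁ ≠ -x₂ := fun h => hx (neg_injective h)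
    rw [Point.add_of_X_ne hx]
    obtain ⟨ha', ea⟩ := hφ _ _ (nonsingular_add h₁ h₂ fun h => (hx h.1).elim)
    rw [ea, e₁, e₂, Point.add_of_X_ne hx']
    set l := (Ecurve p).slope x₁ x₂ y₁ y₂ with hldef
    have hl : (Ecurve p).slope (-x₁) (-x₂) (i * y₁) (i * y₂) = -i * l := by
      rw [hldef, slope_of_X_ne hx', slope_of_X_ne hx]
      have d1 : x₁ - x₂ ≠ 0 := sub_ne_zero_of_ne hx
      have d2 : -x₁ - -x₂ ≠ 0 := sub_ne_zero_of_ne hx'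
      rw [← mul_div_assoc, div_eq_div_iff d2 d1]
      ring
    exact Epoint_some_eq_some (by rw [hl]; exact phi_coordX hi)
      (by rw [hl]; exact phi_coordY hi)

lemma phi_phi {i : ZMod p} (hi : i ^ 2 = -1)
    (φ : (Ecurve p).Point → (Ecurve p).Point) (hφ0 : φ 0 = 0)
    (hφ : ∀ (x y : ZMod p) (h : (Ecurve p).Nonsingular x y),
      ∃ h' : (Ecurve p).Nonsingular (-x) (i * y), φ (Point.some _ _ h) = Point.some _ _ h') :
    ∀ P : (Ecurve p).Point, φ (φ P) = -P := by
  intro P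
  rcases P with _ | @⟨x, y, h⟩
  · rw [← Point.zero_def, hφ0, hφ0, neg_zero]
  obtain ⟨h', e⟩ := hφ x y h
  obtain ⟨h'', e'⟩ := hφ _ _ h'
  rw [e, e', Point.neg_some]
  exact Epoint_some_eq_some (neg_neg x) (by rw [EnegY]; linear_combination y * hi)

lemma eta_ker (hp2 : (2 : ZMod p) ≠ 0)
    (φ : (Ecurve p).Point → (Ecurve p).Point) (hφ0 : φ 0 = 0) {i : ZMod p}
    (hφ : ∀ (x y : ZMod p) (h : (Ecurve p).Nonsingular x y),
      ∃ h' : (Ecurve p).Nonsingular (-x) (i * y), φ (Point.some _ _ h) = Point.some _ _ h')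
    (hT0 : (Ecurve p).Nonsingular 0 0) :
    ∀ P : (Ecurve p).Point, P + φ P = 0 ↔ P = 0 ∨ P = Point.some _ _ hT0 := by
  intro P
  rcases P with _ | @⟨x, y, h⟩
  · rw [← Point.zero_def]
    simp [hφ0]
  obtain ⟨h', e⟩ := hφ x y h
  rw [e]
  constructor
  · intro h0
    have heq := add_eq_zero_iff_eq_neg.mp h0
    rw [Point.neg_some] at heq
    obtain ⟨hx, _⟩ := Epoint_some_inj heq
    have hx0 : x = 0 := by
      have h2x : (2 : ZMod p) * x = 0 := by linear_combination hx
      rcases mul_eq_zero.mp h2x with h0' | h0'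
      · exact absurd h0' hp2
      · exact h0'
    have hy0 : y = 0 := by
      have hcur := (ENS hp2 x y).mp h
      rw [hx0] at hcur
      have : y ^ 2 = 0 := by linear_combination hcur
      exact pow_eq_zero_iff (two_ne_zero) |>.mp this
    right
    exact Epoint_some_eq_some hx0 hy0
  · rintro (h0 | h0)
    · exact absurd h0 (Point.some_ne_zero h)
    · obtain ⟨hx, hy⟩ := Epoint_some_inj h0
      subst hx; subst hy
      apply Point.add_of_Y_eq
      · rw [neg_zero]
      · rw [EnegY, mul_zero, neg_zero]

lemma two_tor (hp2 : (2 : ZMod p) ≠ 0)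
    (hT0 : (Ecurve p).Nonsingular 0 0) (hT1 : (Ecurve p).Nonsingular 1 0)
    (hTm1 : (Ecurve p).Nonsingular (-1) 0) :
    ∀ P : (Ecurve p).Point, P + P = 0 ↔
      P = 0 ∨ P = Point.some _ _ hT0 ∨ P = Point.some _ _ hT1 ∨ P = Point.some _ _ hTm1 := by
  intro P
  rcases P with _ | @⟨x, y, h⟩
  · rw [← Point.zero_def]
    simp
  constructor
  · intro h0
    have heq := add_eq_zero_iff_eq_neg.mp h0
    rw [Point.neg_some] at heq
    obtain ⟨-, hy⟩ := Epoint_some_inj heq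
    rw [EnegY] at hy
    have hy0 : y = 0 := by
      have h2y : (2 : ZMod p) * y = 0 := by linear_combination hy
      rcases mul_eq_zero.mp h2y with h0' | h0'
      · exact absurd h0' hp2
      · exact h0'
    have hcur := (ENS hp2 x y).mp h
    rw [hy0] at hcur
    have hfac : x * (x - 1) * (x + 1) = 0 := by linear_combination -hcur
    rcases mul_eq_zero.mp hfac with h12 | h3
    · rcases mul_eq_zero.mp h12 with hx | hx
      · right; left; exact Epoint_some_eq_some hx hy0
      · right; right; left; exact Epoint_some_eq_some (by linear_combination hx) hy0
    · right; right; right; exact Epoint_some_eq_some (by linear_combination h3) hy0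
  · intro h0
    have hy0 : y = 0 := by
      rcases h0 with h0 | h0 | h0 | h0
      · exact absurd h0 (Point.some_ne_zero h)
      all_goals exact (Epoint_some_inj h0).2
    apply Point.add_of_Y_eq rfl
    rw [EnegY, hy0, neg_zero]

private def toCoords {p : ℕ} [Fact p.Prime] : (Ecurve p).Point → Option (ZMod p × ZMod p)
  | .zero => none
  | @WeierstrassCurve.Affine.Point.some _ _ _ x y _ => Option.some (x, y)

lemma toCoords_inj : Function.Injective (toCoords (p := p)) := by
  rintro (_ | @⟨x₁, y₁, h₁⟩) (_ | @⟨x₂, y₂, h₂⟩) h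
  · rfl
  · simp [toCoords] at h
  · simp [toCoords] at h
  · simp only [toCoords, Option.some.injEq, Prod.mk.injEq] at h
    exact Epoint_some_eq_some h.1 h.2

end Stmt15Aux

open Stmt15Aux

theorem stmt15 (p : ℕ) [Fact p.Prime] (h8 : p % 8 = 1) (i s : ZMod p)
    (hi : i ^ 2 = -1) (hs : s ^ 2 = 2)
    (h1 : IsSquare (1 + s)) (h2 : IsSquare (1 - s))
    (φ : (Ecurve p).Point → (Ecurve p).Point) (hφ0 : φ 0 = 0)
    (hφ : ∀ (x y : ZMod p) (h : (Ecurve p).Nonsingular x y),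
      ∃ h' : (Ecurve p).Nonsingular (-x) (i * y),
        φ (WeierstrassCurve.Affine.Point.some _ _ h) = WeierstrassCurve.Affine.Point.some _ _ h')
    (η : (Ecurve p).Point → (Ecurve p).Point) (hη : ∀ P, η P = P + φ P) :
    ∃ G : AddSubgroup (Ecurve p).Point,
      Nat.card G = 32 ∧ ∀ P : (Ecurve p).Point, P ∈ G ↔ η^[5] P = 0 := by
  have hfact : p.Prime := Fact.out
  haveI : NeZero p := ⟨hfact.ne_zero⟩
  have hpne2 : p ≠ 2 := by
    intro h; rw [h] at h8; norm_num at h8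
  have hp2 : (2 : ZMod p) ≠ 0 := by
    intro h0
    have h2 : ((2 : ℕ) : ZMod p) = 0 := by exact_mod_cast h0
    have hdvd : p ∣ 2 := (CharP.cast_eq_zero_iff (ZMod p) p 2).mp h2
    exact hpne2 ((Nat.prime_dvd_prime_iff_eq hfact Nat.prime_two).mp hdvd)
  haveI : Finite (Ecurve p).Point := Finite.of_injective _ toCoords_inj
  obtain ⟨u, hu⟩ := h1
  obtain ⟨v, hv⟩ := h2
  -- basic nonzero facts
  have h1z : (1 : ZMod p) ≠ 0 := one_ne_zero
  have hsne : s ≠ 0 := by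
    intro h0; rw [h0] at hs; apply hp2; linear_combination -hs
  have h1sne : (1 : ZMod p) + s ≠ 0 := by
    intro h0; apply h1z; linear_combination (s - 1) * h0 - hs
  have hvne : v ≠ 0 := by
    intro h0
    rw [h0, mul_zero] at hv
    apply h1z; linear_combination (-(1 + s)) * hv - hs
  have hj : (u * v) ^ 2 = -1 := by
    linear_combination (-(v * v)) * hu + (-(1 + s)) * hv + (-1) * hs
  have h1pj : 1 + u * v ≠ 0 := by
    intro h0
    apply hp2
    have huv : u * v = -1 := by linear_combination h0
    rw [huv] at hj
    linear_combination hj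
  have h1mj : (1 : ZMod p) - u * v ≠ 0 := by
    intro h0
    apply hp2
    have huv : u * v = 1 := by linear_combination -h0
    rw [huv] at hj
    linear_combination hj
  -- the torsion points
  have hT0 : (Ecurve p).Nonsingular 0 0 := (ENS hp2 0 0).2 (by ring)
  have hT1 : (Ecurve p).Nonsingular 1 0 := (ENS hp2 1 0).2 (by ring)
  have hTm1 : (Ecurve p).Nonsingular (-1) 0 := (ENS hp2 (-1) 0).2 (by ring)
  have hR0 : (Ecurve p).Nonsingular (u * v) (1 - u * v) :=
    (ENS hp2 _ _).2 (by linear_combination (1 - u * v) * hj)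
  have hQ1 : (Ecurve p).Nonsingular (1 + s) (s * (1 + s)) :=
    (ENS hp2 _ _).2 (by linear_combination (s * (1 + s)) * hs)
  have hP0 : (Ecurve p).Nonsingular (u * v * (1 - s + s * v)) (u * v * (1 - s + s * v) * v * (1 + u * v)) :=
    (ENS hp2 _ _).2 (by
      linear_combination ((-1) + (0)*v + (0)*u + (-1)*u*v + (3)*s + (-2)*s*v + (-1)*s*u + (2)*s*u*v + (-3)*s^2 + (4)*s^2*v + (2)*s^2*u + (-1)*s^2*u*v + (0)*s^3 + (0)*s^3*v + (-1)*s^3*u + (-1)*s^3*u*v + (3)*s^4 + (-4)*s^4*v + (-1)*s^4*u + (1)*s^4*u*v + (-3)*s^5 + (2)*s^5*v + (1)*s^5*u + (1)*s^6) * hs + ((-1)*v^4 + (-1)*v^6 + (1)*u*v^3 + (-2)*u*v^5 + (-1)*u^2*v^6 + (2)*s*v^4 + (-2)*s*v^5 + (1)*s*v^6 + (-2)*s*v^7 + (-3)*s*u*v^3 + (3)*s*u*v^4 + (4)*s*u*v^5 + (-4)*s*u*v^6 + (2)*s*u^2*v^6 + (-2)*s*u^2*v^7 + (-1)*s^2*v^4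 + (2)*s^2*v^5 + (-1)*s^2*v^8 + (3)*s^2*u*v^3 + (-6)*s^2*u*v^4 + (1)*s^2*u*v^5 + (4)*s^2*u*v^6 + (-2)*s^2*u*v^7 + (-1)*s^2*u^2*v^6 + (2)*s^2*u^2*v^7 + (-1)*s^2*u^2*v^8 + (-1)*s^3*v^6 + (2)*s^3*v^7 + (-1)*s^3*v^8 + (-1)*s^3*u*v^3 + (3)*s^3*u*v^4 + (-3)*s^3*u*v^5 + (1)*s^3*u*v^6) * hu + ((-2) + (-2)*v^2 + (-1)*v^4 + (-1)*u*v + (-2)*u*v^3 + (4)*s + (-4)*s*v + (2)*s*v^2 + (-4)*s*v^3 + (-2)*s*v^5 + (-2)*s*u + (2)*s*u*v + (-1)*s*u*v^2 + (2)*s*u*v^3 + (-4)*s*u*v^4 + (-1)*s^2 + (4)*s^2*v + (1)*s^2*v^2 + (-2)*s^2*v^5 + (-1)*s^2*v^6 + (2)*s^2*u + (1)*s^2*u*v + (1)*s^2*u*v^2 + (3)*s^2*u*v^3 + (-2)*s^2*u*v^5 + (-4)*s^3 + (6)*s^3*v + (-3)*s^3*v^2 + (6)*s^3*v^3 + (-2)*s^3*v^4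 + (2)*s^3*v^5 + (-2)*s^3*v^6 + (1)*s^3*u + (-3)*s^3*u*v + (2)*s^3*u*v^2 + (-2)*s^3*u*v^3 + (5)*s^3*u*v^4 + (-2)*s^3*u*v^5 + (5)*s^4 + (-6)*s^4*v + (2)*s^4*v^2 + (2)*s^4*v^5 + (-1)*s^4*v^6 + (-3)*s^4*u + (-1)*s^4*u*v^2 + (-1)*s^4*u*v^3 + (1)*s^4*u*v^4 + (-1)*s^5 + (-2)*s^5*v + (1)*s^5*v^2 + (-2)*s^5*v^3 + (1)*s^5*v^4 + (1)*s^5*u*v + (-1)*s^5*u*v^2 + (-2)*s^6 + (2)*s^6*v + (-1)*s^6*v^2 + (1)*s^6*u + (1)*s^7) * hv)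
  have hI1 : (u * v * (1 - s + s * v)) ^ 2 = 1 + 2 * (u * v) * (1 - s) * (u * v * (1 - s + s * v)) := by
    linear_combination ((1) + (-1)*s + (1)*s^3) * hs + ((1)*v^2 + (-2)*s*v^2 + (1)*s^2*v^2 + (-1)*s^2*v^4) * hu + ((1) + (-1)*s + (-2)*s^2 + (-1)*s^2*v^2 + (1)*s^3 + (-1)*s^3*v^2 + (1)*s^4) * hv
  have hx0ne : u * v * (1 - s + s * v) ≠ 0 := by
    intro h0
    rw [h0] at hI1
    apply h1z; linear_combination -hI1
  have hy0ne : u * v * (1 - s + s * v) * v * (1 + u * v) ≠ 0 :=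
    mul_ne_zero (mul_ne_zero hx0ne hvne) h1pj
  -- doubling computations
  have dR0 : Point.some _ _ hR0 + Point.some _ _ hR0 = Point.some _ _ hT0 :=
    Edouble hp2 hR0 hT0 h1mj (l := -(1 + u * v))
      (by linear_combination -hj) (by linear_combination hj) (by linear_combination -hj)
  have dQ1 : Point.some _ _ hQ1 + Point.some _ _ hQ1 = Point.some _ _ hT1 :=
    Edouble hp2 hQ1 hT1 (mul_ne_zero hsne h1sne) (l := s + 1)
      (by linear_combination (2 * s + 1) * hs) (by linear_combination hs) (by ring)
  have hz : (2 : ZMod p) * (2 : ZMod p)⁻¹ = 1 := mul_inv_cancel₀ hp2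
  have dP0 : Point.some _ _ hP0 + Point.some _ _ hP0 = Point.some _ _ hR0 :=
    Edouble hp2 hP0 hR0 hy0ne (l := (2*v + 2*u + s - 2*s*u + s*u*v) * (2 : ZMod p)⁻¹)
      (by linear_combination ((2*v + 2*u + s - 2*s*u + s*u*v) * (u * v * (1 - s + s * v) * v * (1 + u * v))) * hz + ((-1) + (0)*u + (-2)*u*v + (1)*s + (-3)*s*u + (4)*s*u*v + (6)*s^2*u + (-3)*s^2*u*v + (-1)*s^3 + (-3)*s^3*u + (1)*s^3*u*v) * hs + ((1)*v^2 + (-2)*v^4 + (-2)*u*v^3 + (-2)*s*v^2 + (2)*s*v^3 + (2)*s*v^4 + (-2)*s*v^5 + (4)*s*u*v^3 + (-3)*s*u*v^4 + (1)*s^2*v^2 + (-2)*s^2*v^3 + (1)*s^2*v^4 + (-2)*s^2*u*v^3 + (3)*s^2*u*v^4 + (-1)*s^2*u*v^5) * hu + ((-1) + (-2)*v^2 + (-4)*u*v + (1)*s + (-2)*s*v^3 + (-6)*s*u + (4)*s*u*v + (-5)*s*u*v^2 + (2)*s^2 + (3)*s^2*v^2 + (-2)*s^2*v^3 + (6)*s^2*u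 + (-1)*s^2*u*v^3 + (-1)*s^3 + (1)*s^3*v^2 + (3)*s^3*u + (-2)*s^3*u*v + (3)*s^3*u*v^2 + (-1)*s^3*u*v^3 + (-1)*s^4 + (-3)*s^4*u + (1)*s^4*u*v) * hv)
      (by linear_combination ((2 : ZMod p)⁻¹^2) * ((-4) + (2)*u*v + (4)*s + (-4)*s*v + (-1)*s^2) * hs + ((2 : ZMod p)⁻¹^2) * ((-4) + (8)*s + (-4)*s*v + (-4)*s^2 + (4)*s^2*v + (-1)*s^2*v^2) * hu + ((2 : ZMod p)⁻¹^2) * ((-4) + (4)*s*u + (-1)*s^2 + (-1)*s^3) * hv + ((2*(u * v * (1 - s + s * v)) + u*v) * (2*(2 : ZMod p)⁻¹ + 1)) * hz)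
      (by linear_combination (2 : ZMod p)⁻¹ * ((1) + (1)*v + (1)*u + (-1)*u*v + (-1)*s*u + (1)*s^2 + (-1)*s^2*v) * hs + (2 : ZMod p)⁻¹ * ((2)*v^3 + (2)*s*v + (-2)*s*v^2 + (-2)*s*v^3 + (2)*s*v^4 + (-2)*s^2*v + (3)*s^2*v^2 + (-1)*s^2*v^3) * hu + (2 : ZMod p)⁻¹ * ((2)*v + (2)*u + (2)*s*v^2 + (1)*s^2 + (-3)*s^2*v + (2)*s^2*v^2 + (-1)*s^2*u + (1)*s^3 + (-1)*s^3*v) * hv + ((u * v * (1 - s + s * v) * v * (1 + u * v)) + 1 - u*v) * hz)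
  -- φ facts
  have phiadd := phi_add hp2 hi φ hφ0 hφ
  have phiphi := phi_phi hi φ hφ0 hφ
  have phineg : ∀ X : (Ecurve p).Point, φ (-X) = -(φ X) := fun X =>
    map_neg (AddMonoidHom.mk' φ phiadd) X
  have phiT0 : φ (Point.some _ _ hT0) = Point.some _ _ hT0 := by
    obtain ⟨h', e⟩ := hφ 0 0 hT0
    rw [e]; exact Epoint_some_eq_some neg_zero (mul_zero i)
  have phiT1 : φ (Point.some _ _ hT1) = Point.some _ _ hTm1 := by
    obtain ⟨h', e⟩ := hφ 1 0 hT1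
    rw [e]; exact Epoint_some_eq_some rfl (mul_zero i)
  have T0T0 : Point.some _ _ hT0 + Point.some _ _ hT0 = 0 :=
    Point.add_of_Y_eq rfl (by rw [EnegY]; ring)
  have T1T1 : Point.some _ _ hT1 + Point.some _ _ hT1 = 0 :=
    Point.add_of_Y_eq rfl (by rw [EnegY]; ring)
  have Tm1Tm1 : Point.some _ _ hTm1 + Point.some _ _ hTm1 = 0 :=
    Point.add_of_Y_eq rfl (by rw [EnegY]; ring)
  -- distinctness
  have ne01 : Point.some _ _ hT0 ≠ Point.some _ _ hT1 := by
    intro h; exact one_ne_zero (α := ZMod p) ((Epoint_some_inj h).1).symm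
  have ne0m : Point.some _ _ hT0 ≠ Point.some _ _ hTm1 := by
    intro h
    have hx := (Epoint_some_inj h).1
    exact h1z (by linear_combination hx)
  have ne1m : Point.some _ _ hT1 ≠ Point.some _ _ hTm1 := by
    intro h
    have hx := (Epoint_some_inj h).1
    exact hp2 (by linear_combination hx)
  -- the homomorphisms
  have four_eq : ∀ X : (Ecurve p).Point, (4 : ℕ) • X = (X + X) + (X + X) := fun X => by
    rw [show (4 : ℕ) = 2 + 2 from rfl, add_nsmul, two_nsmul]
  let m4 : (Ecurve p).Point →+ (Ecurve p).Point :=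
    AddMonoidHom.mk' (fun P => (4 : ℕ) • P) (fun a b => smul_add 4 a b)
  let m2 : (Ecurve p).Point →+ (Ecurve p).Point :=
    AddMonoidHom.mk' (fun P => (2 : ℕ) • P) (fun a b => smul_add 2 a b)
  let θ : (Ecurve p).Point →+ (Ecurve p).Point :=
    AddMonoidHom.mk' (fun P => (4 : ℕ) • P + φ ((4 : ℕ) • P)) (by
      intro a b
      show (4 : ℕ) • (a + b) + φ ((4 : ℕ) • (a + b)) = _
      rw [show (4 : ℕ) • (a + b) = (4 : ℕ) • a + (4 : ℕ) • b by abel, phiadd]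
      abel)
  have ηker := eta_ker hp2 φ hφ0 hφ hT0
  have ttor := two_tor hp2 hT0 hT1 hTm1
  refine ⟨θ.ker, ?_, ?_⟩
  · -- cardinality
    let ψ : θ.ker →+ (Ecurve p).Point := m4.comp θ.ker.subtype
    have h4P0 : (4 : ℕ) • Point.some _ _ hP0 = Point.some _ _ hT0 := by
      rw [four_eq, dP0, dR0]
    have hrange : (ψ.range : Set (Ecurve p).Point) = {0, Point.some _ _ hT0} := by
      ext Q
      simp only [SetLike.mem_coe, AddMonoidHom.mem_range, Set.mem_insert_iff,
        Set.mem_singleton_iff]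
      constructor
      · rintro ⟨⟨P, hP⟩, rfl⟩
        have hker : (4 : ℕ) • P + φ ((4 : ℕ) • P) = 0 := hP
        exact (ηker ((4 : ℕ) • P)).mp hker
      · rintro (rfl | rfl)
        · exact ⟨0, map_zero ψ⟩
        · refine ⟨⟨Point.some _ _ hP0, ?_⟩, h4P0⟩
          show (4 : ℕ) • Point.some _ _ hP0 + φ ((4 : ℕ) • Point.some _ _ hP0) = 0
          rw [h4P0, phiT0, T0T0]
    have cardrange : Nat.card ψ.range = 2 := by
      have h2' : Nat.card (({0, Point.some _ _ hT0} : Set (Ecurve p).Point)) = 2 := by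
        rw [Nat.card_coe_set_eq, Set.ncard_pair (Ne.symm (Point.some_ne_zero hT0))]
      exact (Nat.card_congr (Equiv.setCongr hrange)).trans h2'
    have e1 : ψ.ker ≃ m4.ker :=
      { toFun := fun x => ⟨x.1.1, AddMonoidHom.mem_ker.mpr (AddMonoidHom.mem_ker.mp x.2)⟩
        invFun := fun y => ⟨⟨y.1, by
          have hy : (4 : ℕ) • y.1 = 0 := AddMonoidHom.mem_ker.mp y.2
          show (4 : ℕ) • y.1 + φ ((4 : ℕ) • y.1) = 0
          rw [hy, hφ0, add_zero]⟩,
          AddMonoidHom.mem_ker.mpr (AddMonoidHom.mem_ker.mp y.2)⟩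
        left_inv := fun x => Subtype.ext (Subtype.ext rfl)
        right_inv := fun y => Subtype.ext rfl }
    -- δ : m4.ker → Point, doubling
    let δ : m4.ker →+ (Ecurve p).Point := m2.comp m4.ker.subtype
    have e2 : δ.ker ≃ m2.ker :=
      { toFun := fun x => ⟨x.1.1, AddMonoidHom.mem_ker.mpr (AddMonoidHom.mem_ker.mp x.2)⟩
        invFun := fun y => ⟨⟨y.1, by
          have hy : (2 : ℕ) • y.1 = 0 := AddMonoidHom.mem_ker.mp y.2
          show (4 : ℕ) • y.1 = 0
          rw [four_eq, ← two_nsmul, ← two_nsmul, hy, two_nsmul, add_zero]⟩,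
          AddMonoidHom.mem_ker.mpr (AddMonoidHom.mem_ker.mp y.2)⟩
        left_inv := fun x => Subtype.ext (Subtype.ext rfl)
        right_inv := fun y => Subtype.ext rfl }
    have hm2ker : (m2.ker : Set (Ecurve p).Point) =
        {0, Point.some _ _ hT0, Point.some _ _ hT1, Point.some _ _ hTm1} := by
      ext Q
      simp only [SetLike.mem_coe, AddMonoidHom.mem_ker, Set.mem_insert_iff,
        Set.mem_singleton_iff]
      rw [show m2 Q = Q + Q from two_nsmul Q]
      exact ttor Q
    have hdrange : (δ.range : Set (Ecurve p).Point) =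
        {0, Point.some _ _ hT0, Point.some _ _ hT1, Point.some _ _ hTm1} := by
      ext Q
      simp only [SetLike.mem_coe, AddMonoidHom.mem_range, Set.mem_insert_iff,
        Set.mem_singleton_iff]
      constructor
      · rintro ⟨⟨P, hP⟩, rfl⟩
        have h4 : (4 : ℕ) • P = 0 := AddMonoidHom.mem_ker.mp hP
        have h2' : δ ⟨P, hP⟩ + δ ⟨P, hP⟩ = 0 := by
          show (2 : ℕ) • P + (2 : ℕ) • P = 0
          rw [← add_nsmul]
          exact h4
        exact (ttor _).mp h2'
      · rintro (rfl | rfl | rfl | rfl)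
        · exact ⟨0, map_zero δ⟩
        · refine ⟨⟨Point.some _ _ hR0, AddMonoidHom.mem_ker.mpr ?_⟩, ?_⟩
          · show (4 : ℕ) • Point.some _ _ hR0 = 0
            rw [four_eq, dR0, T0T0]
          · show (2 : ℕ) • Point.some _ _ hR0 = Point.some _ _ hT0
            rw [two_nsmul, dR0]
        · refine ⟨⟨Point.some _ _ hQ1, AddMonoidHom.mem_ker.mpr ?_⟩, ?_⟩
          · show (4 : ℕ) • Point.some _ _ hQ1 = 0
            rw [four_eq, dQ1, T1T1]
          · show (2 : ℕ) • Point.some _ _ hQ1 = Point.some _ _ hT1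
            rw [two_nsmul, dQ1]
        · have hphiQ1 : φ (Point.some _ _ hQ1) + φ (Point.some _ _ hQ1) = Point.some _ _ hTm1 := by
            rw [← phiadd, dQ1, phiT1]
          refine ⟨⟨φ (Point.some _ _ hQ1), AddMonoidHom.mem_ker.mpr ?_⟩, ?_⟩
          · show (4 : ℕ) • φ (Point.some _ _ hQ1) = 0
            rw [four_eq, hphiQ1, Tm1Tm1]
          · show (2 : ℕ) • φ (Point.some _ _ hQ1) = Point.some _ _ hTm1
            rw [two_nsmul, hphiQ1]
    have card4 : Nat.card ({0, Point.some _ _ hT0, Point.some _ _ hT1, Point.some _ _ hTm1} :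
        Set (Ecurve p).Point) = 4 := by
      rw [Nat.card_coe_set_eq]
      have h01 : (0 : (Ecurve p).Point) ∉
          ({Point.some _ _ hT0, Point.some _ _ hT1, Point.some _ _ hTm1} : Set (Ecurve p).Point) := by
        simp only [Set.mem_insert_iff, Set.mem_singleton_iff]
        push_neg
        exact ⟨Ne.symm (Point.some_ne_zero hT0), Ne.symm (Point.some_ne_zero hT1),
          Ne.symm (Point.some_ne_zero hTm1)⟩
      have h02 : Point.some _ _ hT0 ∉
          ({Point.some _ _ hT1, Point.some _ _ hTm1} : Set (Ecurve p).Point) := by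
        simp only [Set.mem_insert_iff, Set.mem_singleton_iff]
        push_neg
        exact ⟨ne01, ne0m⟩
      rw [Set.ncard_insert_of_notMem h01, Set.ncard_insert_of_notMem h02,
        Set.ncard_pair ne1m]
    have cardm2 : Nat.card m2.ker = 4 :=
      (Nat.card_congr (Equiv.setCongr hm2ker)).trans card4
    have carddrange : Nat.card δ.range = 4 :=
      (Nat.card_congr (Equiv.setCongr hdrange)).trans card4
    have cardm4 : Nat.card m4.ker = 16 := by
      have hh := AddSubgroup.card_eq_card_quotient_mul_card_addSubgroup δ.ker
      rw [Nat.card_congr (QuotientAddGroup.quotientKerEquivRange δ).toEquiv] at hh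
      rw [hh, Nat.card_congr e2, cardm2, carddrange]
    have hh := AddSubgroup.card_eq_card_quotient_mul_card_addSubgroup ψ.ker
    rw [Nat.card_congr (QuotientAddGroup.quotientKerEquivRange ψ).toEquiv] at hh
    rw [hh, Nat.card_congr e1, cardm4, cardrange]
  · -- membership
    intro P
    have e2' : ∀ Q : (Ecurve p).Point, η (η Q) = φ Q + φ Q := by
      intro Q
      rw [hη Q, hη (Q + φ Q), phiadd, phiphi]
      abel
    have phismul : ∀ Q : (Ecurve p).Point, φ ((4 : ℕ) • Q) = (4 : ℕ) • φ Q := fun Q =>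
      AddMonoidHom.map_nsmul (AddMonoidHom.mk' φ phiadd) 4 Q
    have h4η : ∀ Q : (Ecurve p).Point, η (η (η (η Q))) = -((4 : ℕ) • Q) := by
      intro Q
      rw [e2' Q, e2' (φ Q + φ Q), phiadd, phiphi]
      abel
    have hfive : η^[5] P = -((4 : ℕ) • P + φ ((4 : ℕ) • P)) := by
      have : η^[5] P = η (η (η (η (η P)))) := rfl
      rw [this, h4η (η P), hη P, phismul]
      abel
    rw [AddMonoidHom.mem_ker, hfive, neg_eq_zero]
    exact Iff.rfl
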